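/- Let ((X, X̃), (Z, Z̃)) be random vectors with values in (𝒳^p × 𝒳^p) × (K^p × K^p) (𝒳 and K finite, p ≥ 1) whose joint probability mass function factorizes as P(X=x, X̃=x̃, Z=z, Z̃=z̃) = r(z, z̃) · ∏_{j=1}^p f_j(x_j | z_j) · ∏_{j=1}^p f_j(x̃_j | z̃_j), where r is the joint pmf of (Z, Z̃) and each f_j(· | k) is a probability mass function on 𝒳. Assume that for every subset S ⊆ {1,…,p} the pair exchangeability r((z, z̃)_swap(S)) = r(z, z̃) holds for all z, z̃ ∈ K^p. Then for every subset S ⊆ {1,…,p} and all x, x̃ ∈ 𝒳^p, z, z̃ ∈ K^p, one has P((X, X̃) = (x, x̃)_swap(S), (Z, Z̃) = (z, z̃)_swap(S)) = P((X, X̃) = (x, x̃), (Z, Z̃) = (z, z̃)); that is, ((X, X̃)_swap(S), (Z, Z̃)_swap(S)) has the same distribution as ((X, X̃), (Z, Z̃)). -/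
import Mathlib


/-- **Theorem (Knockoff copies of an HMM), joint swap invariance.**
If the joint pmf of `((X, Xt), (Z, Z̃))` factorizes as
`μ x xt z zt = r z zt * ∏ j f j (x j) (z j) * ∏ j f j (xt j) (zt j)`,
where `r` (the joint pmf of `(Z, Z̃)`) is invariant under coordinate swaps
`(z, zt)_swap(S)` for every `S`, and each `f j (· | k)` is a pmf, then for every
`S ⊆ {1,…,p}` the joint law is invariant under simultaneously swapping the
coordinates in `S` of `(X, Xt)` and of `(Z, Z̃)`. -/
theorem hmm_knockoff_joint_swap_invariance
    {𝒳 K : Type*} [Fintype 𝒳] [Fintype K]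
    (p : ℕ) (hp : 1 ≤ p)
    (r : (Fin p → K) → (Fin p → K) → ℝ)
    (hr_nonneg : ∀ z zt, 0 ≤ r z zt)
    (hr_sum : ∑ z : Fin p → K, ∑ zt : Fin p → K, r z zt = 1)
    (hr_swap : ∀ (S : Finset (Fin p)) (z zt : Fin p → K),
      r (fun j => if j ∈ S then zt j else z j) (fun j => if j ∈ S then z j else zt j)
        = r z zt)
    (f : Fin p → 𝒳 → K → ℝ)
    (hf_nonneg : ∀ j a k, 0 ≤ f j a k)
    (hf_sum : ∀ j k, ∑ a : 𝒳, f j a k = 1)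
    (μ : (Fin p → 𝒳) → (Fin p → 𝒳) → (Fin p → K) → (Fin p → K) → ℝ)
    (hμ : ∀ x xt z zt, μ x xt z zt =
      r z zt * (∏ j : Fin p, f j (x j) (z j)) * ∏ j : Fin p, f j (xt j) (zt j)) :
    ∀ (S : Finset (Fin p)) (x xt : Fin p → 𝒳) (z zt : Fin p → K),
      μ (fun j => if j ∈ S then xt j else x j) (fun j => if j ∈ S then x j else xt j)
        (fun j => if j ∈ S then zt j else z j) (fun j => if j ∈ S then z j else zt j)
        = μ x xt z zt := by
  intro S x xt z zt
  rw [hμ, hμ, hr_swap, mul_assoc, mul_assoc, ← Finset.prod_mul_distrib,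
    ← Finset.prod_mul_distrib]
  congr 1
  apply Finset.prod_congr rfl
  intro j _
  by_cases h : j ∈ S <;> simp [h, mul_comm]
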